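/- Every nonzero indecomposable finite-dimensional nilpotent representation (V, x) of the cyclic quiver of type A_n^{(1)} is isomorphic to (V(k,l), x(k,l)) for some integers k ≤ l, and the pair (k,l) is unique up to simultaneous translation by a multiple of n+1: if (V,x) ≅ (V(k,l), x(k,l)) and (V,x) ≅ (V(k',l'), x(k',l')), then there is m ∈ ℤ with k' = k + m(n+1) and l' = l + m(n+1). -/

import Mathlib

/-!
STATEMENT 11: Every nonzero indecomposable finite-dimensional nilpotent
representation of the cyclic quiver of type A_n^{(1)} is isomorphic to
(V(k,l), x(k,l)) for some integers k ≤ l, and the pair (k,l) is unique up to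
simultaneous translation by a multiple of n+1.
-/

set_option linter.unusedSectionVars false

noncomputable section

/-- Transport a graded vector along an equality of indices. -/
def castLM {I : Type*} (V : I → Type*) [∀ i, AddCommGroup (V i)] [∀ i, Module ℂ (V i)]
    {i j : I} (hij : i = j) : V i →ₗ[ℂ] V j := by
  subst hij; exact LinearMap.id

/-- The graded piece V(k,l)_i of the interval representation of the cyclic
quiver with vertex set ℤ/(n+1)ℤ. -/
def VklC (n : ℕ) (k l : ℤ) (i : ZMod (n + 1)) : Type :=
  {r : ℤ // k ≤ r ∧ r ≤ l ∧ (r : ZMod (n + 1)) = i} → ℂ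

instance (n : ℕ) (k l : ℤ) (i : ZMod (n + 1)) : AddCommGroup (VklC n k l i) := by
  unfold VklC; infer_instance
instance (n : ℕ) (k l : ℤ) (i : ZMod (n + 1)) : Module ℂ (VklC n k l i) := by
  unfold VklC; infer_instance

/-- The map x(k,l)_i : V(k,l)_i → V(k,l)_{i-1}, sending e_r ↦ e_{r-1}
(with e_{k-1} = 0). -/
def xklC (n : ℕ) (k l : ℤ) (i : ZMod (n + 1)) :
    VklC n k l i →ₗ[ℂ] VklC n k l (i - 1) where
  toFun v s :=
    if h : s.1 + 1 ≤ l then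
      v ⟨s.1 + 1, by obtain ⟨h1, h2, h3⟩ := s.2; omega, h,
        by obtain ⟨h1, h2, h3⟩ := s.2; push_cast; rw [h3]; ring⟩
    else 0
  map_add' a b := by
    funext s; erw [Pi.add_apply]; by_cases h : s.1 + 1 ≤ l <;> simp [h] <;> rfl
  map_smul' c a := by
    funext s; erw [Pi.smul_apply]; by_cases h : s.1 + 1 ≤ l <;> simp [h] <;> rfl

lemma xklC_apply_pos (n : ℕ) (k l : ℤ) (i : ZMod (n + 1)) (f : VklC n k l i)
    (s : {r : ℤ // k ≤ r ∧ r ≤ l ∧ (r : ZMod (n + 1)) = i - 1}) (h : s.1 + 1 ≤ l) :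
    xklC n k l i f s = f ⟨s.1 + 1, by obtain ⟨h1, h2, h3⟩ := s.2; omega, h,
      by obtain ⟨h1, h2, h3⟩ := s.2; push_cast; rw [h3]; ring⟩ :=
  dif_pos h

lemma xklC_apply_neg (n : ℕ) (k l : ℤ) (i : ZMod (n + 1)) (f : VklC n k l i)
    (s : {r : ℤ // k ≤ r ∧ r ≤ l ∧ (r : ZMod (n + 1)) = i - 1}) (h : ¬ (s.1 + 1 ≤ l)) :
    xklC n k l i f s = 0 :=
  dif_neg h


/-- Composition of N consecutive maps of a representation of the cyclic quiver,
starting at vertex i. -/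
def compN (n : ℕ) (V : ZMod (n + 1) → Type*)
    [∀ i, AddCommGroup (V i)] [∀ i, Module ℂ (V i)]
    (x : ∀ i, V i →ₗ[ℂ] V (i - 1)) :
    (N : ℕ) → (i : ZMod (n + 1)) → (V i →ₗ[ℂ] V (i - (N : ZMod (n + 1))))
  | 0, i => castLM V (by simp)
  | (N + 1), i =>
      castLM V (show i - 1 - (N : ZMod (n + 1)) = i - ((N + 1 : ℕ) : ZMod (n + 1)) by
        push_cast; ring) ∘ₗ compN n V x N (i - 1) ∘ₗ x i

/-- `IsoToVklC` says the representation (V, x) of the cyclic quiver is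
isomorphic to (V(k,l), x(k,l)). -/
def IsoToVklC (n : ℕ) (V : ZMod (n + 1) → Type*)
    [∀ i, AddCommGroup (V i)] [∀ i, Module ℂ (V i)]
    (x : ∀ i, V i →ₗ[ℂ] V (i - 1)) (k l : ℤ) : Prop :=
  ∃ φ : ∀ i : ZMod (n + 1), V i ≃ₗ[ℂ] VklC n k l i,
    ∀ (i : ZMod (n + 1)) (v : V i), φ (i - 1) (x i v) = xklC n k l i (φ i v)

/-- Fintype instance for the index set of `VklC`. -/
instance VklCidx.fintype (n : ℕ) (k l : ℤ) (i : ZMod (n + 1)) :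
    Fintype {r : ℤ // k ≤ r ∧ r ≤ l ∧ (r : ZMod (n + 1)) = i} :=
  Fintype.ofFinset ((Finset.Icc k l).filter fun r => ((r : ZMod (n + 1)) = i))
    (by intro r; simp [Finset.mem_Icc, and_assoc]; exact Iff.rfl)

section Aux
variable {n : ℕ} {V : ZMod (n + 1) → Type*} [∀ i, AddCommGroup (V i)] [∀ i, Module ℂ (V i)]
  (x : ∀ i : ZMod (n + 1), V i →ₗ[ℂ] V (i - 1))

lemma castLM_castLM {i j k : ZMod (n+1)} (h1 : i = j) (h2 : j = k) (v : V i) :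
    castLM V h2 (castLM V h1 v) = castLM V (h1.trans h2) v := by subst h1; subst h2; rfl

lemma x_castLM {i j : ZMod (n+1)} (h : i = j) (v : V i) :
    x j (castLM V h v) = castLM V (by rw [h]) (x i v) := by subst h; rfl

lemma castLM_eq_zero_iff {i j : ZMod (n+1)} (h : i = j) (v : V i) :
    castLM V h v = 0 ↔ v = 0 := by subst h; exact Iff.rfl

/-- peel off the last map -/
lemma compN_succ' (m : ℕ) (i : ZMod (n+1)) (v : V i) :
    compN n V x (m+1) i v
      = castLM V (by push_cast; ring) (x (i - (m : ZMod (n+1))) (compN n V x m i v)) := by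
  induction m generalizing i v with
  | zero =>
      show castLM V _ (compN n V x 0 (i-1) (x i v)) = _
      rw [show compN n V x 0 (i-1) = castLM V (by simp) from rfl]
      rw [show (compN n V x 0 i v) = castLM V (by simp) v from rfl]
      rw [x_castLM x, castLM_castLM, castLM_castLM]
  | succ m ih =>
      show castLM V _ (compN n V x (m+1) (i-1) (x i v)) = _
      rw [ih]
      rw [show (compN n V x (m+1) i v : V _) = castLM V (by push_cast; ring)
        (compN n V x m (i-1) (x i v)) from rfl]
      rw [x_castLM x, castLM_castLM, castLM_castLM]

def Xtot : (∀ i, V i) →ₗ[ℂ] (∀ i, V i) where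
  toFun u j := castLM V (show (j+1) - 1 = j by ring) (x (j+1) (u (j+1)))
  map_add' a b := by funext j; simp
  map_smul' c a := by funext j; simp

lemma Pi_single_apply {i j : ZMod (n+1)} (h : i = j) (w : V i) :
    Pi.single i w j = castLM V h w := by subst h; rw [Pi.single_eq_same]; rfl

lemma incl_castLM {i j : ZMod (n+1)} (h : i = j) (w : V i) :
    Pi.single j (castLM V h w) = Pi.single i w := by subst h; rfl

lemma Xtot_single (i : ZMod (n+1)) (w : V i) :
    Xtot x (Pi.single i w) = Pi.single (i-1) (x i w) := by
  funext j
  show castLM V _ (x (j+1) (Pi.single i w (j+1))) = _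
  by_cases h : j + 1 = i
  · have h' : i = j + 1 := h.symm
    subst h'
    rw [Pi.single_eq_same]
    rw [Pi_single_apply (show j + 1 - 1 = j by ring) (x (j+1) w)]
  · rw [Pi.single_eq_of_ne h, Pi.single_eq_of_ne (by
      intro hj; apply h; rw [hj]; ring), map_zero, map_zero]

lemma Xtot_pow_single (m : ℕ) (i : ZMod (n+1)) (w : V i) :
    (Xtot x ^ m) (Pi.single i w)
      = Pi.single (i - (m : ZMod (n+1))) (compN n V x m i w) := by
  induction m generalizing i w with
  | zero =>
      rw [show compN n V x 0 i w = castLM V (by simp) w from rfl, incl_castLM]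
      simp
  | succ m ih =>
      rw [pow_succ, Module.End.mul_apply, Xtot_single, ih (i-1) (x i w)]
      rw [show compN n V x (m+1) i w = castLM V (by push_cast; ring)
        (compN n V x m (i-1) (x i w)) from rfl, incl_castLM]

lemma single_eq_zero_iff (i : ZMod (n+1)) (w : V i) : Pi.single i w = 0 ↔ w = 0 := by
  constructor
  · intro h; have := congrFun h i; rwa [Pi.single_eq_same] at this
  · intro h; rw [h, Pi.single_zero]

lemma sum_single (u : ∀ i, V i) : ∑ i : ZMod (n+1), Pi.single i (u i) = u :=
  Finset.univ_sum_single u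

end Aux


set_option maxHeartbeats 3200000 in
theorem stmt11_exists (n : ℕ)
    (V : ZMod (n + 1) → Type*) [∀ i, AddCommGroup (V i)] [∀ i, Module ℂ (V i)]
    [∀ i, FiniteDimensional ℂ (V i)]
    (x : ∀ i : ZMod (n + 1), V i →ₗ[ℂ] V (i - 1))
    (hnilp : ∃ N : ℕ, 1 ≤ N ∧ ∀ i : ZMod (n + 1), compN n V x N i = 0)
    (hnonzero : ∃ i : ZMod (n + 1), Nontrivial (V i))
    (hindec : ∀ W W' : ∀ i : ZMod (n + 1), Submodule ℂ (V i),
      (∀ i, ∀ v ∈ W i, x i v ∈ W (i - 1)) →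
      (∀ i, ∀ v ∈ W' i, x i v ∈ W' (i - 1)) →
      (∀ i, IsCompl (W i) (W' i)) →
      (∀ i, W i = ⊥) ∨ (∀ i, W' i = ⊥)) :
    ∃ k l : ℤ, k ≤ l ∧
      ∃ φ : ∀ i : ZMod (n + 1), V i ≃ₗ[ℂ] VklC n k l i,
        ∀ (i : ZMod (n + 1)) (v : V i), φ (i - 1) (x i v) = xklC n k l i (φ i v) := by
  classical
  obtain ⟨N₀, hN₀1, hN₀⟩ := hnilp
  have hXN₀ : (1 ≤ N₀ ∧ Xtot x ^ N₀ = 0) := by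
    refine ⟨hN₀1, ?_⟩
    apply LinearMap.ext; intro u
    conv_lhs => rw [← sum_single u]
    rw [map_sum]
    simp [Xtot_pow_single x, hN₀]
  have hex : ∃ M : ℕ, 1 ≤ M ∧ Xtot x ^ M = 0 := ⟨N₀, hXN₀⟩
  set N := Nat.find hex with hNdef
  obtain ⟨hN1, hXN⟩ : 1 ≤ N ∧ Xtot x ^ N = 0 := Nat.find_spec hex
  -- X^m = 0 for m ≥ N
  have hXge : ∀ m : ℕ, N ≤ m → Xtot x ^ m = 0 := by
    intro m hm
    rw [← Nat.sub_add_cancel hm, pow_add, hXN, mul_zero]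
  -- X^(N-1) ≠ 0
  have hXprev : Xtot x ^ (N - 1) ≠ 0 := by
    rcases Nat.lt_or_ge (N-1) 1 with h | h
    · -- N = 1, X^0 = 1 ≠ 0
      have h0 : N - 1 = 0 := by omega
      rw [h0, pow_zero]
      obtain ⟨i₀, hi₀⟩ := hnonzero
      obtain ⟨w, hw⟩ := exists_ne (0 : V i₀)
      intro hcon
      have := LinearMap.congr_fun hcon (Pi.single i₀ w)
      rw [Module.End.one_apply, LinearMap.zero_apply, single_eq_zero_iff] at this
      exact hw this
    · have := Nat.find_min hex (show N - 1 < N by omega)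
      intro hcon
      exact this ⟨h, hcon⟩
  -- find c, v
  obtain ⟨u, hu⟩ : ∃ u, (Xtot x ^ (N-1)) u ≠ 0 := by
    by_contra hcon
    push_neg at hcon
    exact hXprev (LinearMap.ext hcon)
  obtain ⟨c, hc⟩ : ∃ c : ZMod (n+1), (Xtot x ^ (N-1)) (Pi.single c (u c)) ≠ 0 := by
    by_contra hcon
    push_neg at hcon
    apply hu
    conv_lhs => rw [← sum_single u]
    rw [map_sum, Finset.sum_eq_zero (fun i _ => hcon i)]
  set v : V c := u c with hvdef
  have hv : (Xtot x ^ (N-1)) (Pi.single c v) ≠ 0 := hc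
  have hvne : v ≠ 0 := by
    intro h; apply hv; rw [h, Pi.single_zero, map_zero]
  -- degree of the "bottom" of the cyclic chain
  set d : ZMod (n+1) := c - ((N - 1 : ℕ) : ZMod (n+1)) with hddef
  -- components
  set zfun : ℕ → V d := fun s => ((Xtot x ^ s) (Pi.single c v)) d with hzdef
  have hsingle_z : ∀ s : ℕ, Pi.single d (zfun s)
      = if (c - (s : ZMod (n+1)) = d) then (Xtot x ^ s) (Pi.single c v) else 0 := by
    intro s
    rw [hzdef]
    simp only [Xtot_pow_single x s c v]
    by_cases h : c - (s : ZMod (n+1)) = d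
    · rw [if_pos h, Pi_single_apply h, incl_castLM]
    · rw [if_neg h, Pi.single_eq_of_ne (Ne.symm h), Pi.single_zero]
  have hz_top : Pi.single d (zfun (N-1)) = (Xtot x ^ (N-1)) (Pi.single c v) := by
    rw [hsingle_z, if_pos rfl, Xtot_pow_single]
  -- the span of lower powers
  set p : Submodule ℂ (V d) :=
    Submodule.span ℂ (Set.range fun s : Fin (N-1) => zfun s) with hpdef
  -- key independence fact
  have key : ∀ t k : ℕ, k + t = N - 1 → ∀ b : Fin (N-1) → ℂ,
      (∀ s : Fin (N-1), s.1 < k → b s = 0) →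
      (∑ s : Fin (N-1), b s • (Xtot x ^ s.1) (Pi.single c v)
        = (Xtot x ^ (N-1)) (Pi.single c v)) → False := by
    intro t
    induction t with
    | zero =>
        intro k hk b hb hsum
        apply hv
        rw [← hsum, Finset.sum_eq_zero]
        intro s _
        rw [hb s (by omega), zero_smul]
    | succ t ih =>
        intro k hk b hb hsum
        have happ := congrArg (fun w => (Xtot x ^ (N-1-k)) w) hsum
        simp only [map_sum, map_smul] at happ
        rw [← Module.End.mul_apply, ← pow_add] at happ
        rw [hXge (N-1-k+(N-1)) (by omega), LinearMap.zero_apply] at happ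
        have hterm : ∀ s : Fin (N-1),
            b s • (Xtot x ^ (N-1-k)) ((Xtot x ^ s.1) (Pi.single c v))
              = if (⟨k, by omega⟩ : Fin (N-1)) = s
                  then b s • (Xtot x ^ (N-1)) (Pi.single c v) else 0 := by
          intro s
          rw [← Module.End.mul_apply, ← pow_add]
          rcases lt_trichotomy s.1 k with h | h | h
          · rw [hb s h, zero_smul, if_neg (by simp [Fin.ext_iff]; omega)]
          · rw [if_pos (by simp [Fin.ext_iff]; omega),
              show N-1-k+s.1 = N-1 by omega]
          · rw [if_neg (by simp [Fin.ext_iff]; omega), hXge (N-1-k+s.1) (by omega),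
              LinearMap.zero_apply, smul_zero]
        rw [Finset.sum_congr rfl (fun s _ => hterm s), Finset.sum_ite_eq] at happ
        rw [if_pos (Finset.mem_univ _)] at happ
        have hb0 : b ⟨k, by omega⟩ = 0 := by
          rcases smul_eq_zero.mp happ with h | h
          · exact h
          · exact absurd h hv
        exact ih (k+1) (by omega) b
          (fun s hs => by
            rcases Nat.lt_or_ge s.1 k with h | h
            · exact hb s h
            · have : s = (⟨k, by omega⟩ : Fin (N-1)) := by
                apply Fin.ext; simp; omega
              rw [this]; exact hb0)
          hsum
  -- z(N-1) is not in the span of the lower powers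
  have hznp : zfun (N-1) ∉ p := by
    intro hmem
    rw [hpdef, Submodule.mem_span_range_iff_exists_fun] at hmem
    obtain ⟨a, ha⟩ := hmem
    have h2 : ∑ s : Fin (N-1), a s • (Pi.single d (zfun s.1) : ∀ i, V i)
        = (Xtot x ^ (N-1)) (Pi.single c v) := by
      rw [← hz_top, ← ha]
      rw [show (Pi.single d (∑ s : Fin (N-1), a s • zfun s.1) : ∀ i, V i)
        = LinearMap.single ℂ V d (∑ s : Fin (N-1), a s • zfun s.1) from rfl]
      rw [map_sum]
      simp only [map_smul]
      rfl
    refine key (N-1) 0 (by omega)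
      (fun s => if c - ((s.1 : ℕ) : ZMod (n+1)) = d then a s else 0)
      (fun s hs => by omega) ?_
    rw [← h2]
    apply Finset.sum_congr rfl
    intro s _
    rw [hsingle_z]
    by_cases h : c - ((s.1 : ℕ) : ZMod (n+1)) = d
    · simp only [if_pos h]
    · simp only [if_neg h, smul_zero, zero_smul]
  have hzbar : p.mkQ (zfun (N-1)) ≠ 0 := by
    rw [Submodule.mkQ_apply, ne_eq, Submodule.Quotient.mk_eq_zero]; exact hznp
  obtain ⟨φ₀, hφ₀⟩ : ∃ φ₀ : Module.Dual ℂ (V d ⧸ p), φ₀ (p.mkQ (zfun (N-1))) ≠ 0 := by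
    by_contra hcon; push_neg at hcon
    exact hzbar ((Module.forall_dual_apply_eq_zero_iff ℂ _).mp hcon)
  set lam : (∀ i, V i) →ₗ[ℂ] ℂ :=
    ((φ₀ (p.mkQ (zfun (N-1))))⁻¹ • (φ₀ ∘ₗ p.mkQ)) ∘ₗ LinearMap.proj d with hlamdef
  have hproj : ∀ s : ℕ, lam ((Xtot x ^ s) (Pi.single c v))
      = (φ₀ (p.mkQ (zfun (N-1))))⁻¹ * φ₀ (p.mkQ (zfun s)) := fun s => rfl
  have lam_pow : ∀ s : ℕ,
      lam ((Xtot x ^ s) (Pi.single c v)) = if s = N-1 then 1 else 0 := by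
    intro s
    rcases lt_trichotomy s (N-1) with h | h | h
    · have hmem : zfun s ∈ p := Submodule.subset_span ⟨⟨s, h⟩, rfl⟩
      have h0 : p.mkQ (zfun s) = 0 := (Submodule.Quotient.mk_eq_zero p).mpr hmem
      rw [hproj, if_neg (by omega), h0, map_zero, mul_zero]
    · rw [if_pos h, h, hproj, inv_mul_cancel₀ hφ₀]
    · rw [if_neg (by omega), hXge s (by omega), LinearMap.zero_apply, map_zero]
  -- the cyclic "basis" vectors in each degree
  set g : ∀ i : ZMod (n+1), ℕ → V i := fun i m =>
    if h : c - ((m : ℕ) : ZMod (n+1)) = i then castLM V h (compN n V x m c v) else 0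
    with hgdef
  have hsingle_g : ∀ (i : ZMod (n+1)) (m : ℕ), (Pi.single i (g i m) : ∀ i, V i)
      = if (c - ((m : ℕ) : ZMod (n+1)) = i) then (Xtot x ^ m) (Pi.single c v) else 0 := by
    intro i m
    by_cases h : c - ((m : ℕ) : ZMod (n+1)) = i
    · simp only [hgdef, dif_pos h, if_pos h]
      rw [incl_castLM, Xtot_pow_single]
    · simp only [hgdef, dif_neg h, if_neg h, Pi.single_zero]
  have hg_zero : ∀ (i : ZMod (n+1)) (m : ℕ), N ≤ m → g i m = 0 := by
    intro i m hm
    have h0 : (Xtot x ^ m) (Pi.single c v) = 0 := by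
      rw [hXge m hm, LinearMap.zero_apply]
    have : compN n V x m c v = 0 := by
      have := (Xtot_pow_single x m c v).symm.trans h0
      rwa [single_eq_zero_iff] at this
    simp only [hgdef]
    split_ifs with h
    · rw [this, map_zero]
    · rfl
  have hg_x : ∀ (i : ZMod (n+1)) (m : ℕ), x i (g i m) = g (i-1) (m+1) := by
    intro i m
    by_cases h : c - ((m : ℕ) : ZMod (n+1)) = i
    · have h' : c - (((m+1) : ℕ) : ZMod (n+1)) = i - 1 := by
        rw [← h]; push_cast; ring
      simp only [hgdef, dif_pos h, dif_pos h']
      rw [x_castLM x h, compN_succ' x m c v, castLM_castLM]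
    · have h' : ¬ (c - (((m+1) : ℕ) : ZMod (n+1)) = i - 1) := by
        intro hcon; apply h
        have := congrArg (fun z => z + 1) hcon
        rw [sub_add_cancel] at this
        rw [← this]; push_cast; ring
      simp only [hgdef, dif_neg h, dif_neg h', map_zero]
  have lam_g : ∀ (i : ZMod (n+1)) (m j : ℕ),
      lam ((Xtot x ^ j) (Pi.single i (g i m)))
        = if (c - ((m : ℕ) : ZMod (n+1)) = i ∧ j + m = N-1) then 1 else 0 := by
    intro i m j
    rw [hsingle_g]
    by_cases h : c - ((m : ℕ) : ZMod (n+1)) = i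
    · rw [if_pos h, ← Module.End.mul_apply, ← pow_add, lam_pow]
      by_cases h2 : j + m = N-1
      · rw [if_pos h2, if_pos ⟨h, h2⟩]
      · rw [if_neg h2, if_neg (by tauto)]
    · rw [if_neg h, map_zero, map_zero, if_neg (by tauto)]
  have lam_graded : ∀ (j : ℕ) (i : ZMod (n+1)) (w : V i), i - (j : ZMod (n+1)) ≠ d →
      lam ((Xtot x ^ j) (Pi.single i w)) = 0 := by
    intro j i w hne
    rw [Xtot_pow_single]
    have h0 : (Pi.single (i - (j : ZMod (n+1))) (compN n V x j i w) : ∀ i', V i') d = 0 :=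
      Pi.single_eq_of_ne (Ne.symm hne) _
    show (φ₀ (p.mkQ (zfun (N-1))))⁻¹
        * φ₀ (p.mkQ ((Pi.single (i - (j : ZMod (n+1))) (compN n V x j i w) : ∀ i', V i') d))
      = 0
    rw [h0, map_zero, map_zero, mul_zero]
  -- the two families of submodules
  set W : ∀ i : ZMod (n+1), Submodule ℂ (V i) := fun i =>
    Submodule.span ℂ (Set.range fun m : Fin N => g i m.1) with hWdef
  set W' : ∀ i : ZMod (n+1), Submodule ℂ (V i) := fun i =>
    ⨅ j : ℕ, LinearMap.ker (lam ∘ₗ (Xtot x ^ j) ∘ₗ LinearMap.single ℂ V i) with hW'def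
  have hmemW' : ∀ (i : ZMod (n+1)) (w : V i),
      w ∈ W' i ↔ ∀ j : ℕ, lam ((Xtot x ^ j) (Pi.single i w)) = 0 := by
    intro i w
    rw [hW'def]
    simp only [Submodule.mem_iInf, LinearMap.mem_ker, LinearMap.comp_apply]
    rfl
  have hWx : ∀ i : ZMod (n+1), ∀ w ∈ W i, x i w ∈ W (i-1) := by
    intro i w hw
    induction hw using Submodule.span_induction with
    | mem w hw =>
        obtain ⟨m, rfl⟩ := hw
        rw [hg_x]
        by_cases h : m.1 + 1 < N
        · exact Submodule.subset_span ⟨⟨m.1+1, h⟩, rfl⟩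
        · rw [hg_zero _ _ (by omega)]
          exact Submodule.zero_mem _
    | zero => rw [map_zero]; exact Submodule.zero_mem _
    | add a b _ _ ha hb => rw [map_add]; exact Submodule.add_mem _ ha hb
    | smul t a _ ha => rw [map_smul]; exact Submodule.smul_mem _ t ha
  have hW'x : ∀ i : ZMod (n+1), ∀ w ∈ W' i, x i w ∈ W' (i-1) := by
    intro i w hw
    rw [hmemW'] at hw ⊢
    intro j
    rw [← Xtot_single, ← Module.End.mul_apply, ← pow_succ]
    exact hw (j+1)
  -- disjointness
  have hdisj : ∀ i : ZMod (n+1), Disjoint (W i) (W' i) := by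
    intro i
    rw [Submodule.disjoint_def]
    intro w hwW hwW'
    rw [hWdef] at hwW
    rw [Submodule.mem_span_range_iff_exists_fun] at hwW
    obtain ⟨a, ha⟩ := hwW
    rw [hmemW'] at hwW'
    have hcoef : ∀ m : Fin N, c - ((m.1 : ℕ) : ZMod (n+1)) = i → a m = 0 := by
      intro m hm
      have h1 := hwW' (N - 1 - m.1)
      rw [← ha] at h1
      rw [show (Pi.single i (∑ m : Fin N, a m • g i m.1) : ∀ i', V i')
        = LinearMap.single ℂ V i (∑ m : Fin N, a m • g i m.1) from rfl,
        map_sum, map_sum, map_sum] at h1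
      have hterm : ∀ m' : Fin N,
          lam ((Xtot x ^ (N-1-m.1)) (LinearMap.single ℂ V i (a m' • g i m'.1)))
            = if m = m' then a m' else 0 := by
        intro m'
        rw [map_smul, map_smul, map_smul]
        rw [show (LinearMap.single ℂ V i (g i m'.1) : ∀ i', V i')
          = Pi.single i (g i m'.1) from rfl]
        rw [lam_g]
        by_cases h : m = m'
        · rw [if_pos h, if_pos (by
            constructor
            · rw [← h]; exact hm
            · have := m.2; have := m'.2; omega), smul_eq_mul, mul_one]
        · rw [if_neg h, if_neg (by
            rintro ⟨h1, h2⟩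
            apply h
            apply Fin.ext
            have := m.2; have := m'.2; omega), smul_zero]
      rw [Finset.sum_congr rfl (fun m' _ => hterm m'), Finset.sum_ite_eq,
        if_pos (Finset.mem_univ m)] at h1
      exact h1
    rw [← ha]
    apply Finset.sum_eq_zero
    intro m _
    by_cases h : c - ((m.1 : ℕ) : ZMod (n+1)) = i
    · rw [hcoef m h, zero_smul]
    · rw [hgdef]
      simp only [dif_neg h, smul_zero]
  -- codisjointness
  have hsup : ∀ i : ZMod (n+1), W i ⊔ W' i = ⊤ := by
    intro i
    rw [eq_top_iff]
    intro w _
    set y : V i := ∑ m : Fin N,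
      (lam ((Xtot x ^ (N-1-m.1)) (Pi.single i w))) • g i m.1 with hydef
    have hyW : y ∈ W i := Submodule.sum_mem _ (fun m _ =>
      Submodule.smul_mem _ _ (Submodule.subset_span ⟨m, rfl⟩))
    have hw' : w - y ∈ W' i := by
      rw [hmemW']
      intro j
      by_cases hjN : N ≤ j
      · rw [hXge j hjN, LinearMap.zero_apply, map_zero]
      push_neg at hjN
      rw [Pi.single_sub, map_sub, map_sub]
      by_cases hd : i - (j : ZMod (n+1)) = d
      · -- the relevant degree: the correction works
        have hj' : j ≤ N - 1 := by omega
        have hcm : c - (((N-1-j : ℕ) : ℕ) : ZMod (n+1)) = i := by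
          rw [Nat.cast_sub hj']
          calc c - (((N-1 : ℕ) : ZMod (n+1)) - ((j:ℕ) : ZMod (n+1)))
              = (c - ((N-1 : ℕ) : ZMod (n+1))) + ((j:ℕ) : ZMod (n+1)) := by ring
            _ = d + ((j:ℕ) : ZMod (n+1)) := by rw [hddef]
            _ = (i - ((j:ℕ) : ZMod (n+1))) + ((j:ℕ) : ZMod (n+1)) := by rw [hd]
            _ = i := by ring
        have hys : lam ((Xtot x ^ j) (Pi.single i y))
            = lam ((Xtot x ^ j) (Pi.single i w)) := by
          rw [hydef]
          rw [show (Pi.single i (∑ m : Fin N,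
              (lam ((Xtot x ^ (N-1-m.1)) (Pi.single i w))) • g i m.1) : ∀ i', V i')
            = LinearMap.single ℂ V i (∑ m : Fin N,
              (lam ((Xtot x ^ (N-1-m.1)) (Pi.single i w))) • g i m.1) from rfl,
            map_sum, map_sum, map_sum]
          have hterm : ∀ m : Fin N,
              lam ((Xtot x ^ j) (LinearMap.single ℂ V i
                ((lam ((Xtot x ^ (N-1-m.1)) (Pi.single i w))) • g i m.1)))
              = if (⟨N-1-j, by omega⟩ : Fin N) = m
                  then lam ((Xtot x ^ (N-1-m.1)) (Pi.single i w)) else 0 := by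
            intro m
            rw [map_smul, map_smul, map_smul,
              show (LinearMap.single ℂ V i (g i m.1) : ∀ i', V i')
                = Pi.single i (g i m.1) from rfl, lam_g]
            by_cases h : (⟨N-1-j, by omega⟩ : Fin N) = m
            · rw [if_pos (by
                constructor
                · rw [← h]; exact hcm
                · rw [← h]; show j + (N-1-j) = N-1; omega), if_pos h, smul_eq_mul, mul_one]
            · rw [if_neg (by
                rintro ⟨h1, h2⟩
                apply h; apply Fin.ext
                have := m.2; simp; omega), smul_zero, if_neg h]
          rw [Finset.sum_congr rfl (fun m _ => hterm m), Finset.sum_ite_eq,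
            if_pos (Finset.mem_univ _)]
          rw [show N-1-(N-1-j) = j by omega]
        rw [hys, sub_self]
      · -- irrelevant degree: both terms vanish
        rw [lam_graded j i w hd, lam_graded j i y hd, sub_self]
    rw [show w = y + (w - y) by abel]
    exact Submodule.add_mem_sup hyW hw'
  have hcompl : ∀ i : ZMod (n+1), IsCompl (W i) (W' i) :=
    fun i => ⟨hdisj i, codisjoint_iff.mpr (hsup i)⟩
  -- indecomposability: W' must vanish
  have hg00 : g c 0 ≠ 0 := by
    have h0 : c - ((0 : ℕ) : ZMod (n+1)) = c := by simp
    simp only [hgdef, dif_pos h0]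
    intro hcon
    rw [castLM_eq_zero_iff] at hcon
    rw [show compN n V x 0 c v = castLM V (by simp) v from rfl,
      castLM_eq_zero_iff] at hcon
    exact hvne hcon
  rcases hindec W W' hWx hW'x hcompl with hW0 | hW'0
  · exfalso
    have hmem : g c 0 ∈ W c := Submodule.subset_span ⟨⟨0, by omega⟩, rfl⟩
    rw [hW0 c] at hmem
    exact hg00 ((Submodule.mem_bot ℂ).mp hmem)
  have hVW : ∀ i : ZMod (n+1), W i = ⊤ := by
    intro i
    have h1 := hsup i
    rwa [hW'0 i, sup_bot_eq] at h1
  -- the interval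
  set l : ℤ := (c.val : ℤ) with hldef
  set k : ℤ := l - ((N - 1 : ℕ) : ℤ) with hkdef
  have hN1' : (0:ℤ) ≤ ((N-1 : ℕ) : ℤ) := Int.natCast_nonneg _
  have hkl : k ≤ l := by omega
  have hlc : ((l : ℤ) : ZMod (n+1)) = c := by
    rw [hldef]
    push_cast
    simp [ZMod.natCast_val, ZMod.cast_id]
  have hlk : l - k = ((N-1 : ℕ) : ℤ) := by omega
  have hcm' : ∀ (i : ZMod (n+1)) (r : ℤ), k ≤ r → r ≤ l → ((r : ℤ) : ZMod (n+1)) = i →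
      c - (((l - r).toNat : ℕ) : ZMod (n+1)) = i := by
    intro i r h1 h2 h3
    have htn : (((l - r).toNat : ℕ) : ℤ) = l - r := Int.toNat_of_nonneg (by omega)
    have h4 : (((l - r).toNat : ℕ) : ZMod (n+1)) = ((l - r : ℤ) : ZMod (n+1)) := by
      conv_rhs => rw [← htn]
      push_cast
      ring
    rw [h4]
    push_cast
    rw [hlc, h3]
    ring
  have hindepb : ∀ i : ZMod (n+1), LinearIndependent ℂ
      (fun r : {r : ℤ // k ≤ r ∧ r ≤ l ∧ (r : ZMod (n+1)) = i} =>
        g i (l - r.1).toNat) := by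
    intro i
    rw [linearIndependent_iff']
    intro s a hsum r₀ hr₀
    obtain ⟨h01, h02, h03⟩ := r₀.2
    have hm₀ : ((l - r₀.1).toNat : ℕ) ≤ N - 1 := by omega
    have h1 : lam ((Xtot x ^ (N-1-(l - r₀.1).toNat))
        (LinearMap.single ℂ V i (∑ r ∈ s, a r • g i (l - r.1).toNat))) = 0 := by
      rw [hsum, map_zero, map_zero, map_zero]
    rw [map_sum, map_sum, map_sum] at h1
    have hterm : ∀ r ∈ s,
        lam ((Xtot x ^ (N-1-(l - r₀.1).toNat))
          (LinearMap.single ℂ V i (a r • g i (l - r.1).toNat)))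
        = if r = r₀ then a r else 0 := by
      intro r _
      rw [map_smul, map_smul, map_smul,
        show (LinearMap.single ℂ V i (g i (l - r.1).toNat) : ∀ i', V i')
          = Pi.single i (g i (l - r.1).toNat) from rfl, lam_g]
      obtain ⟨hr1, hr2, hr3⟩ := r.2
      by_cases h : r = r₀
      · rw [if_pos (by
          constructor
          · exact hcm' i r.1 hr1 hr2 hr3
          · rw [h]; omega), if_pos h, smul_eq_mul, mul_one]
      · rw [if_neg (by
          rintro ⟨hc1, hc2⟩
          apply h
          apply Subtype.ext
          have e1 : (((l - r.1).toNat : ℕ) : ℤ) = l - r.1 :=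
            Int.toNat_of_nonneg (by omega)
          have e2 : (((l - r₀.1).toNat : ℕ) : ℤ) = l - r₀.1 :=
            Int.toNat_of_nonneg (by omega)
          omega), smul_zero, if_neg h]
    rw [Finset.sum_congr rfl hterm, Finset.sum_ite_eq' s r₀, if_pos hr₀] at h1
    exact h1
  have hspanb : ∀ i : ZMod (n+1), ⊤ ≤ Submodule.span ℂ (Set.range
      (fun r : {r : ℤ // k ≤ r ∧ r ≤ l ∧ (r : ZMod (n+1)) = i} =>
        g i (l - r.1).toNat)) := by
    intro i
    rw [← hVW i]
    simp only [hWdef]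
    apply Submodule.span_le.mpr
    rintro _ ⟨m, rfl⟩
    by_cases h : c - ((m.1 : ℕ) : ZMod (n+1)) = i
    · apply Submodule.subset_span
      have hm2 := m.2
      refine ⟨⟨l - m.1, by omega, by omega, ?_⟩, ?_⟩
      · push_cast
        rw [hlc, ← h]
      · show g i ((l - (l - (m.1:ℤ))).toNat) = g i m.1
        rw [show ((l - (l - (m.1:ℤ))).toNat) = m.1 by omega]
    · simp only [hgdef, dif_neg h]
      exact Submodule.zero_mem _
  set bas : ∀ i : ZMod (n+1),
      Module.Basis {r : ℤ // k ≤ r ∧ r ≤ l ∧ (r : ZMod (n+1)) = i} ℂ (V i) :=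
    fun i => Module.Basis.mk (hindepb i) (hspanb i) with hbasdef
  refine ⟨k, l, hkl, fun i => (bas i).equivFun, ?_⟩
  intro i v'
  have hlin : ((bas (i-1)).equivFun.toLinearMap ∘ₗ x i)
      = (xklC n k l i) ∘ₗ (bas i).equivFun.toLinearMap := by
    apply (bas i).ext
    intro r
    show (bas (i-1)).equivFun (x i ((bas i) r))
      = xklC n k l i ((bas i).equivFun ((bas i) r))
    obtain ⟨hr1, hr2, hr3⟩ := r.2
    have hbr : x i ((bas i) r) = g (i-1) ((l - r.1).toNat + 1) := by
      simp only [hbasdef]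
      rw [Module.Basis.mk_apply, hg_x]
    funext s
    obtain ⟨hs1, hs2, hs3⟩ := s.2
    by_cases hrk : k < r.1
    · have hmem : k ≤ r.1 - 1 ∧ r.1 - 1 ≤ l ∧ ((r.1 - 1 : ℤ) : ZMod (n+1)) = i - 1 := by
        refine ⟨by omega, by omega, ?_⟩
        push_cast; rw [hr3]
      have hb' : g (i-1) ((l - r.1).toNat + 1)
          = (bas (i-1)) ⟨r.1 - 1, hmem.1, hmem.2.1, hmem.2.2⟩ := by
        simp only [hbasdef]
        rw [Module.Basis.mk_apply]
        show _ = g (i-1) ((l - (r.1-1)).toNat)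
        rw [show ((l - (r.1-1)).toNat) = (l - r.1).toNat + 1 by omega]
      rw [hbr, hb', Module.Basis.equivFun_self]
      by_cases hsl : s.1 + 1 ≤ l
      · rw [xklC_apply_pos n k l i ((bas i).equivFun ((bas i) r)) s hsl, Module.Basis.equivFun_self]
        by_cases he : r.1 = s.1 + 1
        · rw [if_pos (Subtype.ext (by simp; omega)),
            if_pos (Subtype.ext (by simp; omega))]
        · rw [if_neg (fun hcon => he (by
            have := congrArg Subtype.val hcon; simp at this; omega)),
            if_neg (fun hcon => he (by
            have := congrArg Subtype.val hcon; simp at this; omega))]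
      · rw [xklC_apply_neg n k l i ((bas i).equivFun ((bas i) r)) s hsl,
          if_neg (fun hcon => hsl (by
            have := congrArg Subtype.val hcon; simp at this; omega))]
    · have hNr : (l - r.1).toNat + 1 = N := by omega
      rw [hbr, hNr, hg_zero _ _ le_rfl, map_zero]
      by_cases hsl : s.1 + 1 ≤ l
      · rw [xklC_apply_pos n k l i ((bas i).equivFun ((bas i) r)) s hsl, Module.Basis.equivFun_self,
          if_neg (fun hcon => by
            have := congrArg Subtype.val hcon; simp at this; omega)]
        rfl
      · rw [xklC_apply_neg n k l i ((bas i).equivFun ((bas i) r)) s hsl]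
        rfl
  exact LinearMap.congr_fun hlin v'

set_option maxHeartbeats 1600000 in
theorem stmt11_unique (n : ℕ)
    (V : ZMod (n + 1) → Type*) [∀ i, AddCommGroup (V i)] [∀ i, Module ℂ (V i)]
    (x : ∀ i : ZMod (n + 1), V i →ₗ[ℂ] V (i - 1))
    (k l k' l' : ℤ) (hkl : k ≤ l) (hk'l' : k' ≤ l')
    (φ : ∀ i : ZMod (n + 1), V i ≃ₗ[ℂ] VklC n k l i)
    (hφ : ∀ (i : ZMod (n + 1)) (v : V i), φ (i - 1) (x i v) = xklC n k l i (φ i v))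
    (φ' : ∀ i : ZMod (n + 1), V i ≃ₗ[ℂ] VklC n k' l' i)
    (hφ' : ∀ (i : ZMod (n + 1)) (v : V i), φ' (i - 1) (x i v) = xklC n k' l' i (φ' i v)) :
    ∃ m : ℤ, k' = k + m * (n + 1) ∧ l' = l + m * (n + 1) := by
  classical
  -- finrank of the interval pieces
  have hA : ∀ (a b : ℤ) (i : ZMod (n+1)), Module.finrank ℂ (VklC n a b i)
      = Fintype.card {r : ℤ // a ≤ r ∧ r ≤ b ∧ (r : ZMod (n+1)) = i} :=
    fun a b i => Module.finrank_pi ℂ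
  have hB : ∀ (a b : ℤ), a ≤ b →
      ∑ i : ZMod (n+1), Fintype.card {r : ℤ // a ≤ r ∧ r ≤ b ∧ (r : ZMod (n+1)) = i}
        = (b + 1 - a).toNat := by
    intro a b _
    have hcard : ∀ i : ZMod (n+1),
        Fintype.card {r : ℤ // a ≤ r ∧ r ≤ b ∧ (r : ZMod (n+1)) = i}
          = ((Finset.Icc a b).filter (fun r : ℤ => ((r : ZMod (n+1)) = i))).card := by
      intro i
      apply Fintype.card_of_subtype
      intro r
      simp [Finset.mem_Icc, and_assoc]
    rw [Finset.sum_congr rfl (fun i _ => hcard i)]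
    rw [← Finset.card_eq_sum_card_fiberwise
      (f := fun r : ℤ => (r : ZMod (n+1))) (fun r _ => Finset.mem_univ ((r : ZMod (n+1))))]
    exact Int.card_Icc a b
  have hcard : ∀ i : ZMod (n+1),
      Fintype.card {r : ℤ // k ≤ r ∧ r ≤ l ∧ (r : ZMod (n+1)) = i}
        = Fintype.card {r : ℤ // k' ≤ r ∧ r ≤ l' ∧ (r : ZMod (n+1)) = i} := by
    intro i
    rw [← hA, ← hA, ← (φ i).finrank_eq, (φ' i).finrank_eq]
  have hlen : l - k = l' - k' := by
    have h1 : ((l + 1 - k).toNat : ℤ) = ((l' + 1 - k').toNat : ℤ) := by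
      rw [← hB k l hkl, ← hB k' l' hk'l', Finset.sum_congr rfl (fun i _ => hcard i)]
    omega
  -- kernel element at the bottom of the interval
  set eK : VklC n k l ((k : ℤ) : ZMod (n+1)) := fun s => if s.1 = k then (1:ℂ) else 0
    with heKdef
  have hek0 : eK ≠ 0 := by
    intro hcon
    have h2 : eK ⟨k, le_refl k, hkl, rfl⟩ = (0:ℂ) := by rw [hcon]; rfl
    simp only [heKdef] at h2
    simp at h2
  have hekker : xklC n k l ((k : ℤ) : ZMod (n+1)) eK = 0 := by
    funext s
    obtain ⟨hs1, hs2, hs3⟩ := s.2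
    by_cases hsl : s.1 + 1 ≤ l
    · rw [xklC_apply_pos n k l _ eK s hsl]
      show (if s.1 + 1 = k then (1:ℂ) else 0) = _
      rw [if_neg (by omega)]
      rfl
    · rw [xklC_apply_neg n k l _ eK s hsl]
      rfl
  set u : V ((k : ℤ) : ZMod (n+1)) := (φ ((k : ℤ) : ZMod (n+1))).symm eK with hudef
  have hu0 : u ≠ 0 := by
    intro hcon
    apply hek0
    rw [← (φ ((k : ℤ) : ZMod (n+1))).apply_symm_apply eK, ← hudef, hcon, map_zero]
  have hxu : x ((k : ℤ) : ZMod (n+1)) u = 0 := by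
    have h1 := hφ ((k : ℤ) : ZMod (n+1)) u
    rw [hudef, (φ ((k : ℤ) : ZMod (n+1))).apply_symm_apply, hekker] at h1
    exact (LinearEquiv.map_eq_zero_iff _).mp h1
  set w : VklC n k' l' ((k : ℤ) : ZMod (n+1)) := φ' ((k : ℤ) : ZMod (n+1)) u with hwdef
  have hw0 : w ≠ 0 := by
    rw [hwdef]
    intro hcon
    exact hu0 ((LinearEquiv.map_eq_zero_iff _).mp hcon)
  have hwker : xklC n k' l' ((k : ℤ) : ZMod (n+1)) w = 0 := by
    rw [hwdef, ← hφ' ((k : ℤ) : ZMod (n+1)) u, hxu, map_zero]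
  obtain ⟨s, hs⟩ : ∃ s, w s ≠ 0 := by
    by_contra hcon
    push_neg at hcon
    apply hw0
    funext s
    exact hcon s
  obtain ⟨hs1, hs2, hs3⟩ := s.2
  have hsk' : s.1 = k' := by
    by_contra hne
    have ht : k' ≤ s.1 - 1 ∧ s.1 - 1 ≤ l' ∧ ((s.1 - 1 : ℤ) : ZMod (n+1))
        = ((k : ℤ) : ZMod (n+1)) - 1 := ⟨by omega, by omega, by push_cast; rw [hs3]⟩
    have h1 := congrFun hwker ⟨s.1 - 1, ht.1, ht.2.1, ht.2.2⟩
    rw [xklC_apply_pos n k' l' _ w _ (show (s.1 - 1) + 1 ≤ l' by omega)] at h1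
    apply hs
    rw [show s = (⟨s.1 - 1 + 1, by omega, by omega, by
      rw [show s.1 - 1 + 1 = s.1 by omega]; exact hs3⟩ :
      {r : ℤ // k' ≤ r ∧ r ≤ l' ∧ (r : ZMod (n+1)) = ((k : ℤ) : ZMod (n+1))})
      from Subtype.ext (by simp)]
    exact h1
  have hkk' : ((k' : ℤ) : ZMod (n+1)) = ((k : ℤ) : ZMod (n+1)) := by
    rw [← hsk']; exact hs3
  have hdvd : (((n+1) : ℕ) : ℤ) ∣ (k' - k) := by
    apply (ZMod.intCast_zmod_eq_zero_iff_dvd _ _).mp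
    push_cast
    rw [hkk']
    push_cast
    ring
  obtain ⟨m, hm⟩ := hdvd
  refine ⟨m, ?_, ?_⟩
  · push_cast at hm
    linear_combination hm
  · push_cast at hm
    linear_combination hm - hlen

theorem stmt11 (n : ℕ) (hn : 1 ≤ n)
    (V : ZMod (n + 1) → Type*) [∀ i, AddCommGroup (V i)] [∀ i, Module ℂ (V i)]
    [∀ i, FiniteDimensional ℂ (V i)]
    (x : ∀ i : ZMod (n + 1), V i →ₗ[ℂ] V (i - 1))
    -- nilpotent
    (hnilp : ∃ N : ℕ, 1 ≤ N ∧ ∀ i : ZMod (n + 1), compN n V x N i = 0)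
    -- nonzero
    (hnonzero : ∃ i : ZMod (n + 1), Nontrivial (V i))
    -- indecomposable
    (hindec : ∀ W W' : ∀ i : ZMod (n + 1), Submodule ℂ (V i),
      (∀ i, ∀ v ∈ W i, x i v ∈ W (i - 1)) →
      (∀ i, ∀ v ∈ W' i, x i v ∈ W' (i - 1)) →
      (∀ i, IsCompl (W i) (W' i)) →
      (∀ i, W i = ⊥) ∨ (∀ i, W' i = ⊥)) :
    -- (V,x) ≅ (V(k,l), x(k,l)) for some k ≤ l...
    (∃ k l : ℤ, k ≤ l ∧ IsoToVklC n V x k l) ∧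
    -- ...and (k,l) is unique up to simultaneous translation by a multiple of n+1
    (∀ k l k' l' : ℤ, k ≤ l → k' ≤ l' →
      IsoToVklC n V x k l → IsoToVklC n V x k' l' →
      ∃ m : ℤ, k' = k + m * (n + 1) ∧ l' = l + m * (n + 1)) := by
  constructor
  · obtain ⟨k, l, hkl, φ, hφ⟩ := stmt11_exists n V x hnilp hnonzero hindec
    exact ⟨k, l, hkl, ⟨φ, hφ⟩⟩
  · rintro k l k' l' hkl hk'l' ⟨φ, hφ⟩ ⟨φ', hφ'⟩
    exact stmt11_unique n V x k l k' l' hkl hk'l' φ hφ φ' hφ'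

end
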